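/- In any half-extend-respecting ordering of the edges of a temporal graph, the edges of every temporal walk appear in order: if e and f are two edges of a walk with e occurring before f in the walk, then e precedes f in the ordering. -/

import Mathlib

/-- Edge `f` half-extends edge `e`. -/
def HalfExtends {V ε : Type*} (tl hd : ε → V) (dep lam : ε → ℝ) (α : V → ℝ)
    (e f : ε) : Prop :=
  tl f = hd e ∧ dep e + lam e + α (hd e) ≤ dep f

/-- Edge `f` extends edge `e` under waiting constraints `(α, β)`. -/
def Extends {V ε : Type*} (tl hd : ε → V) (dep lam : ε → ℝ) (α : V → ℝ)
    (β : V → EReal) (e f : ε) : Prop :=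
  hd e = tl f ∧ dep e + lam e + α (tl f) ≤ dep f ∧
    (dep f : EReal) ≤ ((dep e + lam e : ℝ) : EReal) + β (tl f)

/-- In any half-extend-respecting ordering of the edges, the edges of every temporal
walk appear in order: if `e` occurs before `f` in the walk then `e` precedes `f`. -/
theorem walk_edges_in_order {V ε : Type*} (tl hd : ε → V) (dep lam : ε → ℝ)
    (α : V → ℝ) (β : V → EReal)
    (r : ε → ε → Prop) (hsto : IsStrictTotalOrder ε r)
    (hresp : ∀ e f, HalfExtends tl hd dep lam α e f → r e f)
    (Q : List ε) (hwalk : List.Chain' (Extends tl hd dep lam α β) Q) :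
    ∀ (i j : Fin Q.length), (i : ℕ) < (j : ℕ) → r (Q.get i) (Q.get j) := by
  intro i j hij
  have htrans : Transitive r := fun a b c => hsto.trans a b c
  have hchain : List.Chain' r Q := by
    refine List.IsChain.imp ?_ hwalk
    intro e f hef
    exact hresp e f ⟨hef.1.symm, by rw [hef.1]; exact hef.2.1⟩
  have hpw : List.Pairwise r Q :=
    by haveI : Trans r r r := ⟨fun h1 h2 => hsto.trans _ _ _ h1 h2⟩; exact (List.isChain_iff_pairwise (R := r) (l := Q)).mp hchain
  exact List.pairwise_iff_get.mp hpw i j hij
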